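/- Let A ∈ ℝ^{n×N} have full row rank and let x ∈ ℝ^N be s-sparse with Ax = b. Let γ be a (3s)-th order P-RIP constant for A with γ < 1/2. Suppose the sequences {x^k}, {u^k} satisfy: u^k is a best s-term approximation of x^k and x^{k+1} = u^k + A*(AA*)^{-1}(b − A u^k) for all k ≥ 0. Then u^k converges to x as k → ∞. -/

import Mathlib

open Matrix Finset Filter Topology

/-- Euclidean norm of a vector. -/
noncomputable def euclNorm {k : ℕ} (x : Fin k → ℝ) : ℝ := Real.sqrt (∑ i, x i ^ 2)

/-- `x` has at most `s` nonzero entries. -/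
def IsSparse {k : ℕ} (s : ℕ) (x : Fin k → ℝ) : Prop :=
  (Finset.univ.filter fun i => x i ≠ 0).card ≤ s

/-- Spectral norm (ℓ²-operator norm) of a matrix. -/
noncomputable def specNorm {m k : Type*} [Fintype m] [Fintype k] [DecidableEq k]
    (M : Matrix m k ℝ) : ℝ :=
  ‖LinearMap.toContinuousLinearMap (Matrix.toEuclideanLin M)‖

/-- `cols A T` is the submatrix of `A` consisting of the columns indexed by `T`. -/
def cols {n N : ℕ} (A : Matrix (Fin n) (Fin N) ℝ) (T : Finset (Fin N)) :
    Matrix (Fin n) {i : Fin N // i ∈ T} ℝ := Matrix.of fun r c => A r c.1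

/-- `subv x T` is the subvector of `x` consisting of the entries indexed by `T`. -/
def subv {N : ℕ} (x : Fin N → ℝ) (T : Finset (Fin N)) : {i : Fin N // i ∈ T} → ℝ :=
  fun i => x i.1

/-- The feedback term `(A_T* A_T)⁻¹ A_T* A_{Tᶜ} x_{Tᶜ}`. -/
noncomputable def fb {n N : ℕ} (A : Matrix (Fin n) (Fin N) ℝ) (T : Finset (Fin N))
    (x : Fin N → ℝ) : {i : Fin N // i ∈ T} → ℝ :=
  ((cols A T)ᵀ * cols A T)⁻¹ *ᵥ ((cols A T)ᵀ *ᵥ (cols A Tᶜ *ᵥ subv x Tᶜ))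

/-- The positive semidefinite square root of a positive semidefinite matrix
(Mathlib's former `Matrix.PosSemidef.sqrt`, removed since). -/
noncomputable def Matrix.PosSemidef.sqrt {n : Type*} [Fintype n] [DecidableEq n]
    {A : Matrix n n ℝ} (hA : A.PosSemidef) : Matrix n n ℝ :=
  hA.1.eigenvectorUnitary.1 * diagonal ((↑) ∘ Real.sqrt ∘ hA.1.eigenvalues) *
    (star hA.1.eigenvectorUnitary : Matrix n n ℝ)

lemma psd_sqrt_mul_self {m : Type*} [Fintype m] [DecidableEq m] {B : Matrix m m ℝ}
    (hB : B.PosSemidef) : hB.sqrt * hB.sqrt = B := by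
  have hU : (star hB.1.eigenvectorUnitary : Matrix m m ℝ) * hB.1.eigenvectorUnitary.1 = 1 :=
    Unitary.coe_star_mul_self _
  have hD : diagonal ((↑) ∘ Real.sqrt ∘ hB.1.eigenvalues) *
      diagonal ((↑) ∘ Real.sqrt ∘ hB.1.eigenvalues) =
      diagonal (RCLike.ofReal ∘ hB.1.eigenvalues : m → ℝ) := by
    rw [diagonal_mul_diagonal]
    congr 1
    funext i
    simp [Real.mul_self_sqrt (hB.eigenvalues_nonneg i)]
  conv_rhs => rw [hB.1.spectral_theorem, Unitary.conjStarAlgAut_apply]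
  unfold Matrix.PosSemidef.sqrt
  rw [← hD]
  simp only [Matrix.mul_assoc]
  rw [← Matrix.mul_assoc (star _ : Matrix m m ℝ) _ _, hU, Matrix.one_mul]

lemma psd_sqrt_transpose {m : Type*} [Fintype m] [DecidableEq m] {B : Matrix m m ℝ}
    (hB : B.PosSemidef) : (hB.sqrt)ᵀ = hB.sqrt := by
  unfold Matrix.PosSemidef.sqrt
  rw [← conjTranspose_eq_transpose_of_trivial, ← star_eq_conjTranspose, star_mul, star_mul,
    star_star, Matrix.mul_assoc]
  congr 2
  rw [star_eq_conjTranspose]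
  exact isHermitian_diagonal _

lemma enorm_sq {k : ℕ} (x : Fin k → ℝ) : euclNorm x ^ 2 = x ⬝ᵥ x := by
  rw [euclNorm, Real.sq_sqrt (by positivity)]
  simp [dotProduct, sq]

lemma enorm_nonneg {k : ℕ} (x : Fin k → ℝ) : 0 ≤ euclNorm x := Real.sqrt_nonneg _

lemma dp_nonneg {k : ℕ} (x : Fin k → ℝ) : 0 ≤ x ⬝ᵥ x :=
  Finset.sum_nonneg fun i _ => mul_self_nonneg _

lemma dp_transpose {m k : ℕ} (M : Matrix (Fin m) (Fin k) ℝ) (x : Fin k → ℝ) (y : Fin m → ℝ) :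
    x ⬝ᵥ (Mᵀ *ᵥ y) = (M *ᵥ x) ⬝ᵥ y := by
  rw [dotProduct_mulVec, vecMul_transpose, dotProduct_comm]

lemma key {m k : ℕ} (M : Matrix (Fin m) (Fin k) ℝ) (hM : M * Mᵀ = 1) (w : Fin k → ℝ) :
    (w - Mᵀ *ᵥ (M *ᵥ w)) ⬝ᵥ (w - Mᵀ *ᵥ (M *ᵥ w)) = w ⬝ᵥ w - (M *ᵥ w) ⬝ᵥ (M *ᵥ w) := by
  set q := M *ᵥ w with hq
  have h1 : w ⬝ᵥ (Mᵀ *ᵥ q) = q ⬝ᵥ q := by rw [dp_transpose]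
  have h2 : (Mᵀ *ᵥ q) ⬝ᵥ (Mᵀ *ᵥ q) = q ⬝ᵥ q := by
    rw [dp_transpose, mulVec_mulVec, hM, one_mulVec]
  have h3 : (Mᵀ *ᵥ q) ⬝ᵥ w = q ⬝ᵥ q := by rw [dotProduct_comm, h1]
  simp only [sub_dotProduct, dotProduct_sub, h1, h2, h3]
  ring

lemma sparse_sub {k s t : ℕ} {x y : Fin k → ℝ} (hx : IsSparse s x) (hy : IsSparse t y) :
    IsSparse (s + t) (x - y) := by
  unfold IsSparse at *
  calc (Finset.univ.filter fun i => (x - y) i ≠ 0).card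
      ≤ ((Finset.univ.filter fun i => x i ≠ 0) ∪ (Finset.univ.filter fun i => y i ≠ 0)).card := by
        apply Finset.card_le_card
        intro i hi
        simp only [Finset.mem_filter, Finset.mem_union, Finset.mem_univ, true_and] at *
        by_contra hc
        push_neg at hc
        simp [Pi.sub_apply, hc.1, hc.2] at hi
    _ ≤ _ := le_trans (Finset.card_union_le _ _) (add_le_add hx hy)

/-- NST+HT converges to the exact sparse solution under the P-RIP. -/
theorem stmt_6 {n N s : ℕ} (hnN : n < N) (A : Matrix (Fin n) (Fin N) ℝ)
    (hpd : (A * Aᵀ).PosDef)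
    (x : Fin N → ℝ) (hx : IsSparse s x) (b : Fin n → ℝ) (hb : A *ᵥ x = b)
    (γ : ℝ) (hγ0 : 0 ≤ γ) (hγ : γ < 1/2)
    (hPRIP : ∀ z : Fin N → ℝ, IsSparse (3*s) z →
      (1 - γ) * euclNorm z ^ 2 ≤ euclNorm ((hpd.posSemidef.sqrt)⁻¹ *ᵥ (A *ᵥ z)) ^ 2)
    (xk u : ℕ → Fin N → ℝ)
    (hus : ∀ k, IsSparse s (u k))
    (hub : ∀ k, ∀ z : Fin N → ℝ, IsSparse s z → euclNorm (u k - xk k) ≤ euclNorm (z - xk k))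
    (hxk : ∀ k, xk (k+1) = u k + Aᵀ *ᵥ ((A * Aᵀ)⁻¹ *ᵥ (b - A *ᵥ u k))) :
    Filter.Tendsto u Filter.atTop (nhds x) := by
  set S := hpd.posSemidef.sqrt with hS
  set M := S⁻¹ * A with hMdef
  have hSS : S * S = A * Aᵀ := psd_sqrt_mul_self hpd.posSemidef
  have hdet : IsUnit (A * Aᵀ).det := hpd.det_pos.ne'.isUnit
  have hSdet : IsUnit S.det := by
    have : S.det * S.det = (A * Aᵀ).det := by rw [← det_mul, hSS]
    exact isUnit_of_mul_isUnit_left (this ▸ hdet)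
  have hSsymm : Sᵀ = S := by
    exact psd_sqrt_transpose hpd.posSemidef
  have hSinvS : S⁻¹ * S = 1 := Matrix.nonsing_inv_mul S hSdet
  have hSSinv : S * S⁻¹ = 1 := Matrix.mul_nonsing_inv S hSdet
  have hMT : Mᵀ = Aᵀ * S⁻¹ := by
    rw [hMdef, Matrix.transpose_mul, Matrix.transpose_nonsing_inv, hSsymm]
  have hMMT : M * Mᵀ = 1 := by
    rw [hMdef, hMT, Matrix.mul_assoc, ← Matrix.mul_assoc A, ← hSS]
    rw [show S * S * S⁻¹ = S from by rw [Matrix.mul_assoc, hSSinv, Matrix.mul_one]]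
    exact hSinvS
  have hP : Mᵀ * M = Aᵀ * (A * Aᵀ)⁻¹ * A := by
    rw [hMT, hMdef, ← hSS, Matrix.mul_inv_rev]
    simp only [Matrix.mul_assoc]
  -- A *ᵥ xk (k+1) = b
  have hAxk : ∀ k, A *ᵥ xk (k+1) = b := by
    intro k
    rw [hxk k, Matrix.mulVec_add, Matrix.mulVec_mulVec, Matrix.mulVec_mulVec,
      Matrix.mul_nonsing_inv _ hdet, Matrix.one_mulVec]
    abel
  -- P-RIP in dot product form
  have hT : ∀ z : Fin N → ℝ, IsSparse (3*s) z →
      (1 - γ) * (z ⬝ᵥ z) ≤ (M *ᵥ z) ⬝ᵥ (M *ᵥ z) := by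
    intro z hz
    have := hPRIP z hz
    rwa [enorm_sq, enorm_sq, Matrix.mulVec_mulVec] at this
  have coiso : ∀ w : Fin N → ℝ, (M *ᵥ w) ⬝ᵥ (M *ᵥ w) ≤ w ⬝ᵥ w := by
    intro w
    have h := key M hMMT w
    have h0 := dp_nonneg (w - Mᵀ *ᵥ (M *ᵥ w))
    linarith [h0, h.symm]
  have sp3 : ∀ a b' : Fin N → ℝ, IsSparse s a → IsSparse s b' → IsSparse (3*s) (a - b') := by
    intro a b' ha hb'
    have := sparse_sub ha hb'
    exact le_trans this (by omega)
  -- the per-step contraction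
  have step : ∀ k, (1 - γ) * ((u (k+1) - x) ⬝ᵥ (u (k+1) - x)) ≤
      γ * ((u k - x) ⬝ᵥ (u k - x)) := by
    intro k
    set e := x - u k with he
    set f := u (k+1) - x with hf
    set v := xk (k+1) with hv
    have hvx : x - v = e - Mᵀ *ᵥ (M *ᵥ e) := by
      have hbA : b - A *ᵥ u k = A *ᵥ e := by rw [he, Matrix.mulVec_sub, hb]
      rw [hv, hxk k, hbA]
      simp only [Matrix.mulVec_mulVec]
      rw [← Matrix.mul_assoc, ← hP, he]
      abel
    have hesp : IsSparse (3*s) e := sp3 _ _ hx (hus k)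
    have hfsp : IsSparse (3*s) f := sp3 _ _ (hus (k+1)) hx
    have h2 : (x - v) ⬝ᵥ (x - v) ≤ γ * (e ⬝ᵥ e) := by
      rw [hvx, key M hMMT e]
      have := hT e hesp
      linarith
    have hAv : A *ᵥ v = b := by rw [hv]; exact hAxk k
    have hAfe : A *ᵥ f = A *ᵥ (u (k+1) - v) := by
      rw [hf, Matrix.mulVec_sub, Matrix.mulVec_sub, hb, hAv]
    have hAf : M *ᵥ f = M *ᵥ (u (k+1) - v) := by
      rw [hMdef]
      simp only [← Matrix.mulVec_mulVec]
      rw [hAfe]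
    have h4 : (1 - γ) * (f ⬝ᵥ f) ≤ (x - v) ⬝ᵥ (x - v) := by
      calc (1 - γ) * (f ⬝ᵥ f) ≤ (M *ᵥ f) ⬝ᵥ (M *ᵥ f) := hT f hfsp
        _ = (M *ᵥ (u (k+1) - v)) ⬝ᵥ (M *ᵥ (u (k+1) - v)) := by rw [hAf]
        _ ≤ (u (k+1) - v) ⬝ᵥ (u (k+1) - v) := coiso _
        _ ≤ (x - v) ⬝ᵥ (x - v) := by
            have hn := hub (k+1) x hx
            rw [← hv] at hn
            calc (u (k+1) - v) ⬝ᵥ (u (k+1) - v) = euclNorm (u (k+1) - v) ^ 2 :=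
                  (enorm_sq _).symm
              _ ≤ euclNorm (x - v) ^ 2 := pow_le_pow_left₀ (enorm_nonneg _) hn 2
              _ = (x - v) ⬝ᵥ (x - v) := enorm_sq _
    have hee : e ⬝ᵥ e = (u k - x) ⬝ᵥ (u k - x) := by
      have : e = -(u k - x) := by rw [he]; abel
      rw [this, neg_dotProduct, dotProduct_neg, neg_neg]
    calc (1 - γ) * (f ⬝ᵥ f) ≤ (x - v) ⬝ᵥ (x - v) := h4
      _ ≤ γ * (e ⬝ᵥ e) := h2
      _ = γ * ((u k - x) ⬝ᵥ (u k - x)) := by rw [hee]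
  -- geometric decay
  set E : ℕ → ℝ := fun k => (u k - x) ⬝ᵥ (u k - x) with hE
  set ρ : ℝ := γ / (1 - γ) with hρ
  have h1γ : (0:ℝ) < 1 - γ := by linarith
  have hρ0 : 0 ≤ ρ := div_nonneg hγ0 h1γ.le
  have hρ1 : ρ < 1 := (div_lt_one h1γ).2 (by linarith)
  have hgeo : ∀ k, E k ≤ ρ ^ k * E 0 := by
    intro k
    induction k with
    | zero => simp
    | succ k ih =>
        have hs := step k
        have : E (k+1) ≤ ρ * E k := by
          rw [hρ, div_mul_eq_mul_div, le_div_iff₀ h1γ]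
          linarith [hs]
        calc E (k+1) ≤ ρ * E k := this
          _ ≤ ρ * (ρ ^ k * E 0) := by
              exact mul_le_mul_of_nonneg_left ih hρ0
          _ = ρ ^ (k+1) * E 0 := by ring
  have hE0 : ∀ k, 0 ≤ E k := fun k => dp_nonneg _
  have hlim : Tendsto E atTop (nhds 0) := by
    have h1 : Tendsto (fun k => ρ ^ k * E 0) atTop (nhds 0) := by
      simpa using (tendsto_pow_atTop_nhds_zero_of_lt_one hρ0 hρ1).mul_const (E 0)
    exact tendsto_of_tendsto_of_tendsto_of_le_of_le tendsto_const_nhds h1 hE0 hgeo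
  -- coordinatewise convergence
  rw [tendsto_pi_nhds]
  intro i
  rw [tendsto_iff_dist_tendsto_zero]
  have hcoord : ∀ k, dist (u k i) (x i) ^ 2 ≤ E k := by
    intro k
    have : (u k i - x i) * (u k i - x i) ≤ E k := by
      rw [hE]
      exact Finset.single_le_sum (f := fun j => (u k - x) j * (u k - x) j)
        (fun j _ => mul_self_nonneg _) (Finset.mem_univ i)
    rw [Real.dist_eq, sq_abs, sq]
    exact this
  have hsq : Tendsto (fun k => dist (u k i) (x i) ^ 2) atTop (nhds 0) :=
    tendsto_of_tendsto_of_tendsto_of_le_of_le tendsto_const_nhds hlim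
      (fun k => sq_nonneg _) hcoord
  have := (Real.continuous_sqrt.tendsto 0).comp hsq
  simp only [Function.comp_def, Real.sqrt_zero] at this
  have heq : (fun k => Real.sqrt (dist (u k i) (x i) ^ 2)) = fun k => dist (u k i) (x i) := by
    funext k
    rw [Real.sqrt_sq dist_nonneg]
  rwa [heq] at this
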